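/- Let τ ∈ (0,1], let X be a random variable with values in [0,1] that has a continuous distribution (its CDF F is continuous), and let b* = F†(τ) be its τ-th quantile, so that P(X ≤ b*) = τ. Then for every b̂ ∈ [0,1], Var((b̂ − X)⁺) ≤ 2τ + 2(b̂ − b*)². -/

import Mathlib

open MeasureTheory

/-- For a continuously distributed `X` with values in `[0,1]` and τ-th quantile `b* = F†(τ)`
(so that `P(X ≤ b*) = τ`), for every `b̂ ∈ [0,1]`,
`Var((b̂ − X)⁺) ≤ 2τ + 2(b̂ − b*)²`. -/
theorem variance_relu_quantile_bound {Ω : Type*} [MeasurableSpace Ω]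
    (μ : Measure Ω) [IsProbabilityMeasure μ]
    (τ : ℝ) (hτ : τ ∈ Set.Ioc (0:ℝ) 1)
    (X : Ω → ℝ) (hXmeas : Measurable X) (hX01 : ∀ ω, X ω ∈ Set.Icc (0:ℝ) 1)
    (F : ℝ → ℝ) (hF : ∀ x, F x = (μ {ω | X ω ≤ x}).toReal) (hFcont : Continuous F)
    (bstar : ℝ) (hbstar : bstar = sInf {x ∈ Set.Icc (0:ℝ) 1 | τ ≤ F x})
    (hquant : F bstar = τ) :
    ∀ bhat ∈ Set.Icc (0:ℝ) 1,
      ProbabilityTheory.variance (fun ω => max (bhat - X ω) 0) μ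
        ≤ 2 * τ + 2 * (bhat - bstar)^2 := by
  intro bhat hb
  set Y : Ω → ℝ := fun ω => max (bhat - X ω) 0 with hY
  -- bstar ≤ 1
  have h1mem : (1:ℝ) ∈ {x ∈ Set.Icc (0:ℝ) 1 | τ ≤ F x} := by
    refine ⟨by simp, ?_⟩
    have : {ω | X ω ≤ (1:ℝ)} = Set.univ := by
      ext ω; simp [(hX01 ω).2]
    rw [hF, this]
    simp [hτ.2]
  have hb1 : bstar ≤ 1 := by
    rw [hbstar]
    exact csInf_le ⟨0, fun x hx => hx.1.1⟩ h1mem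
  set s : Set Ω := {ω | X ω ≤ bstar} with hs
  have hsm : MeasurableSet s := measurableSet_le hXmeas measurable_const
  -- τ = μ s
  have hτs : (μ s).toReal = τ := by rw [← hquant, hF]
  have hYmeas : Measurable Y :=
    (measurable_const.sub hXmeas).max measurable_const
  have h1 := ProbabilityTheory.variance_le_expectation_sq (μ := μ)
    hYmeas.aestronglyMeasurable
  set g : Ω → ℝ := fun ω => 2 * s.indicator (fun _ => (1:ℝ)) ω + 2 * (bhat - bstar)^2
    with hg
  have hgint : Integrable g μ :=
    (((integrable_const (1:ℝ)).indicator hsm).const_mul 2).add (integrable_const _)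
  have hpt : ∀ ω, (Y ^ 2) ω ≤ g ω := by
    intro ω
    have hx0 := (hX01 ω).1
    set x := X ω
    have hz0 : 0 ≤ max (bstar - x) 0 := le_max_right _ _
    have hz1 : max (bstar - x) 0 ≤ 1 := by
      apply max_le (by linarith) (by norm_num)
    have hylip : Y ω ≤ max (bstar - x) 0 + |bhat - bstar| := by
      rcases le_or_gt (bhat - x) 0 with h | h
      · simp only [hY]
        have : max (bhat - x) 0 = 0 := max_eq_right h
        rw [this]
        positivity
      · simp only [hY]
        rw [max_eq_left h.le]
        have : bhat - x ≤ (bstar - x) + |bhat - bstar| := by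
          have := le_abs_self (bhat - bstar); linarith
        exact this.trans (by gcongr; exact le_max_left _ _)
    have hy0 : 0 ≤ Y ω := le_max_right _ _
    have hsq : (Y ω)^2 ≤ 2 * (max (bstar - x) 0)^2 + 2 * (bhat - bstar)^2 := by
      have habs : |bhat - bstar|^2 = (bhat - bstar)^2 := sq_abs _
      nlinarith [sq_nonneg (max (bstar - x) 0 - |bhat - bstar|), abs_nonneg (bhat - bstar)]
    have hind : (max (bstar - x) 0)^2 ≤ s.indicator (fun _ => (1:ℝ)) ω := by
      by_cases hω : ω ∈ s
      · rw [Set.indicator_of_mem hω]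
        nlinarith
      · rw [Set.indicator_of_notMem hω]
        have hxb : ¬ (x ≤ bstar) := hω
        have : max (bstar - x) 0 = 0 := max_eq_right (by push_neg at hxb; linarith)
        rw [this]; norm_num
    calc (Y ^ 2) ω = (Y ω)^2 := rfl
      _ ≤ 2 * (max (bstar - x) 0)^2 + 2 * (bhat - bstar)^2 := hsq
      _ ≤ g ω := by simp only [hg]; linarith
  have h2 : ∫ ω, (Y ^ 2) ω ∂μ ≤ ∫ ω, g ω ∂μ := by
    apply integral_mono_of_nonneg
    · exact Filter.Eventually.of_forall (fun ω => sq_nonneg (Y ω))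
    · exact hgint
    · exact Filter.Eventually.of_forall hpt
  have h3 : ∫ ω, g ω ∂μ = 2 * τ + 2 * (bhat - bstar)^2 := by
    rw [hg]
    rw [integral_add (((integrable_const (1:ℝ)).indicator hsm).const_mul 2) (integrable_const _),
      MeasureTheory.integral_const_mul]
    rw [integral_indicator_const _ hsm, integral_const]
    simp [hτs, Measure.real]
  linarith [h1, h2.trans_eq h3]
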